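/- Let $f : \mathbb{R}^2 \to \mathbb{R}$ with $\int f \, d\xi = 0$, $f \in L^1(\mathbb{R}^2)$, and $\int |\xi| |f(\xi)| d\xi < \infty$. If $|f(\xi)| \lesssim (1+|\xi|)^{-4}$ then the Newtonian potential $c(\xi) = -\frac{1}{2\pi}\int \log|\xi - \eta| f(\eta)\, d\eta$ satisfies $|\nabla c(\xi)| \le C |\xi|^{-2}$ for $|\xi| \ge 1$. -/

import Mathlib

open MeasureTheory Real Filter

noncomputable section

open Metric Set

variable {E : Type*} [NormedAddCommGroup E] [InnerProductSpace ℝ E]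

lemma norm_K (x : E) : ‖(‖x‖ ^ 2)⁻¹ • x‖ = ‖x‖⁻¹ := by
  rcases eq_or_ne x 0 with rfl | hx
  · simp
  · rw [norm_smul, norm_inv, norm_pow, norm_norm, sq]
    rw [mul_inv, mul_assoc, inv_mul_cancel₀ (norm_ne_zero_iff.2 hx), mul_one]

lemma K_sub_norm (a b : E) (ha : a ≠ 0) (hb : b ≠ 0) :
    ‖(‖a‖ ^ 2)⁻¹ • a - (‖b‖ ^ 2)⁻¹ • b‖ = ‖a - b‖ / (‖a‖ * ‖b‖) := by
  have hna : ‖a‖ ≠ 0 := norm_ne_zero_iff.2 ha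
  have hnb : ‖b‖ ≠ 0 := norm_ne_zero_iff.2 hb
  have h1 : ‖(‖a‖ ^ 2)⁻¹ • a - (‖b‖ ^ 2)⁻¹ • b‖ ^ 2 = (‖a - b‖ / (‖a‖ * ‖b‖)) ^ 2 := by
    rw [norm_sub_sq_real, div_pow, norm_sub_sq_real]
    rw [norm_smul, norm_smul, inner_smul_left, inner_smul_right]
    simp only [norm_inv, norm_pow, norm_norm, RCLike.conj_to_real]
    field_simp
    ring
  have h2 : 0 ≤ ‖a - b‖ / (‖a‖ * ‖b‖) := by positivity
  nlinarith [norm_nonneg ((‖a‖ ^ 2)⁻¹ • a - (‖b‖ ^ 2)⁻¹ • b), sq_nonneg (‖(‖a‖ ^ 2)⁻¹ • a - (‖b‖ ^ 2)⁻¹ • b‖ - ‖a - b‖ / (‖a‖ * ‖b‖))]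

local notation "E2" => EuclideanSpace ℝ (Fin 2)

lemma integrableOn_inv_norm_ball :
    IntegrableOn (fun x : E2 => ‖x‖⁻¹) (ball 0 1) := by
  set μ' := volume.restrict (ball (0:E2) 1) with hμ'
  have hmeas : Measurable fun x : E2 => ‖x‖⁻¹ := measurable_norm.inv
  constructor
  · exact hmeas.aestronglyMeasurable
  · rw [hasFiniteIntegral_iff_ofReal (Eventually.of_forall fun x => by positivity)]
    rw [lintegral_eq_lintegral_meas_le μ' (Eventually.of_forall fun x => by positivity)
      hmeas.aemeasurable]
    set V := volume (ball (0:E2) 1) with hV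
    have hVfin : V < ⊤ := measure_ball_lt_top
    have hg1 : ∀ t ∈ Ioc (0:ℝ) 1, μ' {a : E2 | t ≤ ‖a‖⁻¹} ≤ V := fun t ht => by
      refine le_trans (measure_mono (subset_univ _)) ?_
      rw [hμ', Measure.restrict_apply_univ]
    have hg2 : ∀ t ∈ Ioi (1:ℝ), μ' {a : E2 | t ≤ ‖a‖⁻¹} ≤ ENNReal.ofReal (t ^ (-2:ℝ)) * V := by
      intro t ht
      have ht0 : (0:ℝ) < t := lt_trans one_pos ht
      have hsub : {a : E2 | t ≤ ‖a‖⁻¹} ⊆ closedBall 0 t⁻¹ := by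
        intro a ha
        simp only [mem_setOf_eq] at ha
        have ha0 : a ≠ 0 := by
          rintro rfl; simp at ha; linarith
        have hn : (0:ℝ) < ‖a‖ := norm_pos_iff.2 ha0
        rw [mem_closedBall_zero_iff]
        have : (‖a‖⁻¹)⁻¹ ≤ t⁻¹ := by gcongr
        rwa [inv_inv] at this
      calc μ' {a : E2 | t ≤ ‖a‖⁻¹} ≤ volume (closedBall (0:E2) t⁻¹) := by
            exact le_trans (Measure.restrict_le_self _) (measure_mono hsub)
        _ = ENNReal.ofReal (t⁻¹ ^ Module.finrank ℝ (EuclideanSpace ℝ (Fin 2))) * V := by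
            rw [Measure.addHaar_closedBall _ _ (by positivity)]
        _ = ENNReal.ofReal (t ^ (-2:ℝ)) * V := by
            congr 2
            rw [finrank_euclideanSpace_fin, inv_pow, ← Real.rpow_natCast t 2,
              ← Real.rpow_neg ht0.le]
            norm_num
    calc ∫⁻ t in Ioi (0:ℝ), μ' {a : E2 | t ≤ ‖a‖⁻¹}
        ≤ ∫⁻ t in Ioc (0:ℝ) 1 ∪ Ioi 1, μ' {a : E2 | t ≤ ‖a‖⁻¹} :=
          lintegral_mono_set Ioi_subset_Ioc_union_Ioi
      _ ≤ (∫⁻ t in Ioc (0:ℝ) 1, μ' {a : E2 | t ≤ ‖a‖⁻¹}) +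
          ∫⁻ t in Ioi (1:ℝ), μ' {a : E2 | t ≤ ‖a‖⁻¹} := lintegral_union_le _ _ _
      _ < ⊤ := by
          refine ENNReal.add_lt_top.2 ⟨?_, ?_⟩
          · calc ∫⁻ t in Ioc (0:ℝ) 1, μ' {a : E2 | t ≤ ‖a‖⁻¹}
                ≤ ∫⁻ _ in Ioc (0:ℝ) 1, V := setLIntegral_mono' measurableSet_Ioc hg1
              _ = V * volume (Ioc (0:ℝ) 1) := by rw [setLIntegral_const]
              _ < ⊤ := by
                  rw [Real.volume_Ioc]
                  exact ENNReal.mul_lt_top hVfin (by norm_num)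
          · calc ∫⁻ t in Ioi (1:ℝ), μ' {a : E2 | t ≤ ‖a‖⁻¹}
                ≤ ∫⁻ t in Ioi (1:ℝ), ENNReal.ofReal (t ^ (-2:ℝ)) * V :=
                  setLIntegral_mono' measurableSet_Ioi hg2
              _ = (∫⁻ t in Ioi (1:ℝ), ENNReal.ofReal (t ^ (-2:ℝ))) * V :=
                  lintegral_mul_const' _ _ hVfin.ne
              _ < ⊤ := by
                  refine ENNReal.mul_lt_top ?_ hVfin
                  exact (integrableOn_Ioi_rpow_of_lt (by norm_num) one_pos).setLIntegral_lt_top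

lemma aux_deriv (y : ℝ) (hy : (0:ℝ) < 1 + y) :
    HasDerivAt (fun y : ℝ => -(1+y)⁻¹) (((1+y)^2)⁻¹) y := by
  have h := ((hasDerivAt_id y).const_add 1).inv hy.ne'
  have h2 := h.neg
  rw [neg_div, neg_neg, one_div] at h2
  exact h2

lemma aux_tendsto : Tendsto (fun y : ℝ => -(1+y)⁻¹) atTop (nhds 0) := by
  have h : Tendsto (fun y : ℝ => (1+y)⁻¹) atTop (nhds 0) :=
    tendsto_inv_atTop_zero.comp (tendsto_atTop_add_const_left _ 1 tendsto_id)
  simpa using h.neg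

lemma aux_integrableOn_Ioi (R : ℝ) (hR : 0 < R) :
    IntegrableOn (fun y : ℝ => ((1+y)^2)⁻¹) (Ioi R) := by
  refine integrableOn_Ioi_deriv_of_nonneg ?_ (fun y hy => aux_deriv y (by simp at hy ⊢; linarith))
    (fun y hy => by positivity) aux_tendsto
  exact (((continuous_const.add continuous_id).continuousAt.inv₀ (ne_of_gt (by show (0:ℝ) < 1 + R; linarith))).neg).continuousWithinAt

lemma aux_integral_Ioi (R : ℝ) (hR : 0 < R) :
    ∫ y in Ioi R, ((1+y)^2)⁻¹ = (1+R)⁻¹ := by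
  rw [integral_Ioi_of_hasDerivAt_of_tendsto
    ((((continuous_const.add continuous_id).continuousAt.inv₀ (ne_of_gt (by show (0:ℝ) < 1 + R; linarith))).neg).continuousWithinAt)
    (fun y hy => aux_deriv y (by simp at hy ⊢; linarith))
    (aux_integrableOn_Ioi R hR) aux_tendsto]
  simp

lemma tail_bound (R : ℝ) (hR : 0 < R) :
    ∫ η : E2, Set.indicator {x : E2 | R ≤ ‖x‖} (fun η => ((1+‖η‖)^3)⁻¹) η ≤
      2 * (volume (ball (0:E2) 1)).toReal * (1+R)⁻¹ := by
  set V := (volume (ball (0:E2) 1)).toReal with hV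
  have hV0 : 0 ≤ V := ENNReal.toReal_nonneg
  set f₀ : ℝ → ℝ := Set.indicator (Ici R) (fun y => ((1+y)^3)⁻¹) with hf₀
  have hfe : (fun η : E2 => Set.indicator {x : E2 | R ≤ ‖x‖} (fun η => ((1+‖η‖)^3)⁻¹) η)
      = fun η : E2 => f₀ ‖η‖ := by
    funext η
    by_cases h : R ≤ ‖η‖ <;>
      simp [hf₀, Set.indicator_apply, mem_setOf_eq, h, mem_Ici]
  rw [hfe, integral_fun_norm_addHaar volume f₀, finrank_euclideanSpace_fin]
  have hf0nn : ∀ y : ℝ, 0 ≤ f₀ y := by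
    intro y; by_cases h : y ∈ Ici R
    · have h1 : (0:ℝ) < 1 + y := by have := mem_Ici.mp h; linarith
      rw [hf₀, Set.indicator_of_mem h]; positivity
    · rw [hf₀, Set.indicator_of_notMem h]
  have hIci : IntegrableOn (fun y : ℝ => ((1+y)^2)⁻¹) (Ici R) :=
    (integrableOn_Ici_iff_integrableOn_Ioi).2 (aux_integrableOn_Ioi R hR)
  have hinter : Ioi (0:ℝ) ∩ Ici R = Ici R := by
    rw [inter_eq_right]; exact fun y hy => lt_of_lt_of_le hR hy
  have hJ1 : ∫ y in Ioi (0:ℝ), y ^ (2-1) • f₀ y ≤ (1+R)⁻¹ := by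
    have hmaj : Integrable (Set.indicator (Ici R) (fun y : ℝ => ((1+y)^2)⁻¹))
        (volume.restrict (Ioi (0:ℝ))) :=
      (hIci.integrable_indicator measurableSet_Ici).restrict
    have hle : ∫ y in Ioi (0:ℝ), y ^ (2-1) • f₀ y ≤
        ∫ y in Ioi (0:ℝ), Set.indicator (Ici R) (fun y : ℝ => ((1+y)^2)⁻¹) y := by
      refine integral_mono_of_nonneg ?_ hmaj ?_
      · filter_upwards [ae_restrict_mem measurableSet_Ioi] with y hy
        simp only [show (2-1 : ℕ) = 1 from rfl, pow_one, smul_eq_mul]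
        exact mul_nonneg (le_of_lt hy) (hf0nn y)
      · filter_upwards [ae_restrict_mem measurableSet_Ioi] with y hy
        simp only [show (2-1 : ℕ) = 1 from rfl, pow_one, smul_eq_mul]
        by_cases h : y ∈ Ici R
        · rw [hf₀, Set.indicator_of_mem h, Set.indicator_of_mem h]
          have h1 : (0:ℝ) < 1 + y := by simp at hy; linarith
          calc y * ((1+y)^3)⁻¹ ≤ (1+y) * ((1+y)^3)⁻¹ :=
                mul_le_mul_of_nonneg_right (by linarith) (by positivity)
            _ = ((1+y)^2)⁻¹ := by field_simp
        · rw [hf₀, Set.indicator_of_notMem h, Set.indicator_of_notMem h, mul_zero]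
    refine hle.trans ?_
    rw [setIntegral_indicator measurableSet_Ici, hinter,
      integral_Ici_eq_integral_Ioi, aux_integral_Ioi R hR]
  calc (2:ℕ) • (V • ∫ y in Ioi (0:ℝ), y ^ (2-1) • f₀ y)
      = 2 * (V * ∫ y in Ioi (0:ℝ), y ^ (2-1) • f₀ y) := by
        rw [nsmul_eq_mul, smul_eq_mul]; norm_num
    _ ≤ 2 * (V * (1+R)⁻¹) := by
        gcongr
    _ = 2 * V * (1+R)⁻¹ := by ring

lemma pointwise_bound (C₀ : ℝ) (hC₀ : 0 ≤ C₀) (ξ η : E2) (hξ : 1 ≤ ‖ξ‖) (hne : η ≠ ξ)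
    (fv : ℝ) (hfv : 0 ≤ fv) (hdec : fv ≤ C₀ * ((1 + ‖η‖) ^ 4)⁻¹) :
    fv * (‖η‖ / (‖ξ - η‖ * ‖ξ‖)) ≤
      (2 / ‖ξ‖ ^ 2) * (‖η‖ * fv)
      + (C₀ / ‖ξ‖) * Set.indicator {x : E2 | ‖ξ‖/2 ≤ ‖x‖} (fun η => ((1 + ‖η‖) ^ 3)⁻¹) η
      + (8 * C₀ / ‖ξ‖ ^ 2) * Set.indicator (ball ξ 1) (fun η => ‖ξ - η‖⁻¹) η := by
  have hξ0 : (0:ℝ) < ‖ξ‖ := lt_of_lt_of_le one_pos hξ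
  have hd : ξ - η ≠ 0 := sub_ne_zero.2 (Ne.symm hne)
  have hd0 : (0:ℝ) < ‖ξ - η‖ := norm_pos_iff.2 hd
  have h1η : (0:ℝ) < 1 + ‖η‖ := by positivity
  have hind2 : 0 ≤ Set.indicator {x : E2 | ‖ξ‖/2 ≤ ‖x‖} (fun η => ((1 + ‖η‖) ^ 3)⁻¹) η :=
    Set.indicator_nonneg (fun x _ => by positivity) η
  have hind3 : 0 ≤ Set.indicator (ball ξ 1) (fun η => ‖ξ - η‖⁻¹) η :=
    Set.indicator_nonneg (fun x _ => by positivity) η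
  have ht1 : 0 ≤ (C₀ / ‖ξ‖) * Set.indicator {x : E2 | ‖ξ‖/2 ≤ ‖x‖}
      (fun η => ((1 + ‖η‖) ^ 3)⁻¹) η := mul_nonneg (by positivity) hind2
  have ht2 : 0 ≤ (8 * C₀ / ‖ξ‖ ^ 2) * Set.indicator (ball ξ 1) (fun η => ‖ξ - η‖⁻¹) η :=
    mul_nonneg (by positivity) hind3
  have ht0 : 0 ≤ (2 / ‖ξ‖ ^ 2) * (‖η‖ * fv) :=
    mul_nonneg (by positivity) (mul_nonneg (norm_nonneg η) hfv)
  have htri : ‖ξ‖ ≤ ‖ξ - η‖ + ‖η‖ := by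
    have := norm_add_le (ξ - η) η
    rwa [sub_add_cancel] at this
  by_cases hA : ‖ξ‖/2 ≤ ‖ξ - η‖
  · -- far case
    have key : fv * (‖η‖ / (‖ξ - η‖ * ‖ξ‖)) ≤ (2 / ‖ξ‖ ^ 2) * (‖η‖ * fv) := by
      have h1 : fv * (‖η‖ / (‖ξ - η‖ * ‖ξ‖)) ≤ fv * (‖η‖ / ((‖ξ‖/2) * ‖ξ‖)) := by gcongr
      refine h1.trans (le_of_eq ?_)
      field_simp
    linarith
  · push_neg at hA
    have hη2 : ‖ξ‖/2 ≤ ‖η‖ := by linarith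
    have hmem2 : η ∈ {x : E2 | ‖ξ‖/2 ≤ ‖x‖} := hη2
    have hfv3 : fv * ‖η‖ ≤ C₀ * ((1 + ‖η‖) ^ 3)⁻¹ := by
      calc fv * ‖η‖ ≤ (C₀ * ((1 + ‖η‖) ^ 4)⁻¹) * (1 + ‖η‖) := by
            gcongr; linarith
        _ = C₀ * ((1 + ‖η‖) ^ 3)⁻¹ := by
            rw [mul_assoc, inv_mul_eq_div, show (1+‖η‖)^4 = (1+‖η‖) * (1+‖η‖)^3 by ring,
              div_mul_eq_div_div, div_self h1η.ne', one_div]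
    by_cases hB : 1 ≤ ‖ξ - η‖
    · -- middle case
      have key : fv * (‖η‖ / (‖ξ - η‖ * ‖ξ‖)) ≤
          (C₀ / ‖ξ‖) * ((1 + ‖η‖) ^ 3)⁻¹ := by
        have e : fv * (‖η‖ / (‖ξ - η‖ * ‖ξ‖)) = (fv * ‖η‖) / (‖ξ - η‖ * ‖ξ‖) := by ring
        rw [e]
        calc (fv * ‖η‖) / (‖ξ - η‖ * ‖ξ‖) ≤ (C₀ * ((1 + ‖η‖) ^ 3)⁻¹) / (1 * ‖ξ‖) := by gcongr
          _ = (C₀ / ‖ξ‖) * ((1 + ‖η‖) ^ 3)⁻¹ := by rw [one_mul]; ring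
      rw [Set.indicator_of_mem hmem2] at ht1 ⊢
      linarith
    · -- near case
      push_neg at hB
      have hmem3 : η ∈ ball ξ 1 := by
        rw [mem_ball, dist_eq_norm, ← norm_neg, neg_sub]
        exact hB
      have e2 : fv * ‖η‖ ≤ 8 * C₀ / ‖ξ‖ ^ 3 := by
        refine hfv3.trans ?_
        have h3 : ((1 + ‖η‖) ^ 3)⁻¹ ≤ ((‖ξ‖/2) ^ 3)⁻¹ :=
          inv_anti₀ (by positivity) (pow_le_pow_left₀ (by positivity) (by linarith) 3)
        calc C₀ * ((1 + ‖η‖) ^ 3)⁻¹ ≤ C₀ * ((‖ξ‖/2) ^ 3)⁻¹ := by gcongr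
          _ = 8 * C₀ / ‖ξ‖ ^ 3 := by
              rw [mul_comm, inv_mul_eq_div, div_eq_div_iff (by positivity) (by positivity)]
              ring
      have key : fv * (‖η‖ / (‖ξ - η‖ * ‖ξ‖)) ≤ (8 * C₀ / ‖ξ‖ ^ 2) * ‖ξ - η‖⁻¹ := by
        have e : fv * (‖η‖ / (‖ξ - η‖ * ‖ξ‖)) = (fv * ‖η‖) * ‖ξ - η‖⁻¹ / ‖ξ‖ := by
          field_simp
        rw [e]
        calc (fv * ‖η‖) * ‖ξ - η‖⁻¹ / ‖ξ‖ ≤ (8 * C₀ / ‖ξ‖ ^ 3) * ‖ξ - η‖⁻¹ / ‖ξ‖ := by gcongr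
          _ = 8 * C₀ / ‖ξ‖ ^ 4 * ‖ξ - η‖⁻¹ := by
              rw [div_mul_eq_mul_div, div_div, ← pow_succ]; ring
          _ ≤ 8 * C₀ / ‖ξ‖ ^ 2 * ‖ξ - η‖⁻¹ := by
              have h24 : 8 * C₀ / ‖ξ‖ ^ 4 ≤ 8 * C₀ / ‖ξ‖ ^ 2 :=
                div_le_div_of_nonneg_left (by positivity) (by positivity)
                  (pow_le_pow_right₀ hξ (by norm_num))
              exact mul_le_mul_of_nonneg_right h24 (by positivity)
      rw [Set.indicator_of_mem hmem3] at ht2 ⊢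
      linarith

/-- Let `f : ℝ² → ℝ` with `∫ f = 0`, `f ∈ L¹`, `∫ |ξ||f(ξ)| dξ < ∞`. If
`|f(ξ)| ≤ C₀ (1+|ξ|)^{-4}`, then the gradient of the Newtonian potential,
`∇c(ξ) = -(2π)⁻¹ ∫ (ξ-η)/|ξ-η|² f(η) dη`, satisfies `|∇c(ξ)| ≤ C |ξ|^{-2}`
for `|ξ| ≥ 1`. -/
theorem newtonian_gradient_decay (f : EuclideanSpace ℝ (Fin 2) → ℝ) (C₀ : ℝ)
    (hf1 : Integrable f) (hmean : (∫ ξ, f ξ) = 0)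
    (hf2 : Integrable (fun ξ => ‖ξ‖ * |f ξ|))
    (hdecay : ∀ ξ, |f ξ| ≤ C₀ * (1 + ‖ξ‖) ^ (-(4 : ℝ))) :
    ∃ C : ℝ, ∀ ξ : EuclideanSpace ℝ (Fin 2), 1 ≤ ‖ξ‖ →
      ‖(-(2 * Real.pi)⁻¹ : ℝ) • ∫ η, f η • ((‖ξ - η‖ ^ 2)⁻¹ • (ξ - η))‖ ≤
        C * ‖ξ‖ ^ (-(2 : ℝ)) := by
  classical
  set V : ℝ := (volume (ball (0 : E2) 1)).toReal with hV
  set G : E2 → ℝ := Set.indicator (ball (0:E2) 1) (fun x => ‖x‖⁻¹) with hG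
  have hGint : Integrable G := integrableOn_inv_norm_ball.integrable_indicator measurableSet_ball
  set J : ℝ := ∫ x : E2, G x with hJ
  have hJ0 : 0 ≤ J :=
    integral_nonneg fun x => Set.indicator_nonneg (fun y _ => by positivity) x
  set M₁ : ℝ := ∫ η : E2, ‖η‖ * |f η| with hM
  have hM0 : 0 ≤ M₁ := integral_nonneg fun η => by positivity
  have hC₀ : 0 ≤ C₀ := by
    have h := hdecay 0
    have h2 := abs_nonneg (f 0)
    simp [Real.one_rpow] at h
    linarith
  have hrpow4 : ∀ y : ℝ, 0 ≤ y → y ^ (-(4:ℝ)) = (y^4)⁻¹ := fun y hy => by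
    rw [← Real.rpow_natCast y 4, ← Real.rpow_neg hy]; norm_num
  have hdec' : ∀ η, |f η| ≤ C₀ * ((1 + ‖η‖)^4)⁻¹ := fun η => by
    have h := hdecay η
    rwa [hrpow4 _ (by positivity)] at h
  refine ⟨2 * M₁ + 4 * V * C₀ + 8 * C₀ * J, ?_⟩
  intro ξ hξ
  have hξ0 : (0:ℝ) < ‖ξ‖ := lt_of_lt_of_le one_pos hξ
  have hξne : ξ ≠ 0 := norm_pos_iff.1 hξ0
  have hKm : Measurable (fun x : E2 => ((‖x‖^2 : ℝ))⁻¹ • x) :=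
    ((measurable_norm.pow_const 2).inv).smul measurable_id
  have hGcomp : (fun η : E2 => G (ξ - η)) =
      Set.indicator (ball ξ 1) (fun η => ‖ξ - η‖⁻¹) := by
    funext η
    by_cases h : ‖ξ - η‖ < 1
    · rw [hG, Set.indicator_of_mem (mem_ball_zero_iff.2 h),
        Set.indicator_of_mem (by rw [mem_ball, dist_eq_norm, ← norm_neg, neg_sub]; exact h)]
    · rw [hG, Set.indicator_of_notMem (fun hc => h (mem_ball_zero_iff.1 hc)),
        Set.indicator_of_notMem (fun hc => h (by
          rw [mem_ball, dist_eq_norm, ← norm_neg, neg_sub] at hc; exact hc))]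
  have htrans := Measure.measurePreserving_sub_left (volume : Measure E2) ξ
  have hball_ind_int : Integrable (Set.indicator (ball ξ 1) (fun η : E2 => ‖ξ - η‖⁻¹)) := by
    rw [← hGcomp]
    exact (htrans.integrable_comp hGint.aestronglyMeasurable).2 hGint
  have hball_int_eq : ∫ η : E2, Set.indicator (ball ξ 1) (fun η => ‖ξ - η‖⁻¹) η = J := by
    rw [← hGcomp, hJ]
    exact integral_sub_left_eq_self G volume ξ
  have hKsm : AEStronglyMeasurable (fun η : E2 => f η • ((‖ξ - η‖^2)⁻¹ • (ξ - η))) volume := by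
    apply AEStronglyMeasurable.smul hf1.aestronglyMeasurable
    exact (hKm.comp (measurable_const.sub measurable_id)).aestronglyMeasurable
  have hFint : Integrable (fun η : E2 => f η • ((‖ξ - η‖^2)⁻¹ • (ξ - η))) := by
    refine Integrable.mono'
      (g := fun η => C₀ * Set.indicator (ball ξ 1) (fun η => ‖ξ-η‖⁻¹) η + |f η|)
      ((hball_ind_int.const_mul C₀).add hf1.abs) hKsm ?_
    refine Eventually.of_forall fun η => ?_
    rw [norm_smul, Real.norm_eq_abs, norm_K]
    by_cases h : η ∈ ball ξ 1
    · rw [Set.indicator_of_mem h]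
      have h1 : |f η| ≤ C₀ := by
        refine (hdec' η).trans ?_
        calc C₀ * ((1+‖η‖)^4)⁻¹ ≤ C₀ * 1 := by
              gcongr
              rw [inv_le_one_iff₀]
              right
              exact one_le_pow₀ (by linarith [norm_nonneg η])
          _ = C₀ := mul_one _
      have h2 : (0:ℝ) ≤ ‖ξ - η‖⁻¹ := by positivity
      have h3 := mul_le_mul_of_nonneg_right h1 h2
      have h4 := abs_nonneg (f η)
      linarith
    · rw [Set.indicator_of_notMem h, mul_zero, zero_add]
      rw [mem_ball, dist_eq_norm, ← norm_neg, neg_sub] at h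
      push_neg at h
      have h2 : ‖ξ - η‖⁻¹ ≤ 1 := by
        rw [inv_le_one_iff₀]; right; exact h
      calc |f η| * ‖ξ-η‖⁻¹ ≤ |f η| * 1 := by gcongr
        _ = |f η| := mul_one _
  have h0 : (∫ η : E2, f η • ((‖ξ‖^2)⁻¹ • ξ)) = 0 := by
    rw [integral_smul_const, hmean, zero_smul]
  have hker : (fun η : E2 => f η • ((‖ξ-η‖^2)⁻¹ • (ξ-η) - (‖ξ‖^2)⁻¹ • ξ))
      = fun η => f η • ((‖ξ-η‖^2)⁻¹ • (ξ-η)) - f η • ((‖ξ‖^2)⁻¹ • ξ) := by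
    funext η; rw [smul_sub]
  have hsub : (∫ η : E2, f η • ((‖ξ-η‖^2)⁻¹ • (ξ-η) - (‖ξ‖^2)⁻¹ • ξ))
      = ∫ η : E2, f η • ((‖ξ-η‖^2)⁻¹ • (ξ-η)) := by
    rw [hker, integral_sub hFint (hf1.smul_const _), h0, sub_zero]
  set g1 : E2 → ℝ := fun η => (2/‖ξ‖^2) * (‖η‖ * |f η|) with hg1
  set g2 : E2 → ℝ := fun η =>
    (C₀/‖ξ‖) * Set.indicator {x : E2 | ‖ξ‖/2 ≤ ‖x‖} (fun η => ((1+‖η‖)^3)⁻¹) η with hg2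
  set g3 : E2 → ℝ := fun η =>
    (8*C₀/‖ξ‖^2) * Set.indicator (ball ξ 1) (fun η => ‖ξ-η‖⁻¹) η with hg3
  have hg1int : Integrable g1 := hf2.const_mul _
  have hind2meas : MeasurableSet {x : E2 | ‖ξ‖/2 ≤ ‖x‖} :=
    measurableSet_le measurable_const measurable_norm
  have hrpow3 : ∀ y : ℝ, 0 ≤ y → y ^ (-(3:ℝ)) = (y^3)⁻¹ := fun y hy => by
    rw [← Real.rpow_natCast y 3, ← Real.rpow_neg hy]; norm_num
  have hindint : Integrable
      (Set.indicator {x : E2 | ‖ξ‖/2 ≤ ‖x‖} (fun η : E2 => ((1+‖η‖)^3)⁻¹)) := by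
    refine (integrable_one_add_norm (E := E2) (μ := volume) (r := 3) ?_).mono' ?_ ?_
    · rw [finrank_euclideanSpace_fin]; norm_num
    · exact (((measurable_const.add measurable_norm).pow_const 3).inv.indicator
        hind2meas).aestronglyMeasurable
    · refine Eventually.of_forall fun η => ?_
      rw [Real.norm_eq_abs,
        abs_of_nonneg (Set.indicator_nonneg (fun y _ => by positivity) η)]
      by_cases h : η ∈ {x : E2 | ‖ξ‖/2 ≤ ‖x‖}
      · rw [Set.indicator_of_mem h, hrpow3 _ (by positivity)]
      · rw [Set.indicator_of_notMem h]
        positivity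
  have hg2int : Integrable g2 := hindint.const_mul _
  have hg3int : Integrable g3 := hball_ind_int.const_mul _
  have hae : ∀ᵐ η : E2, η ≠ ξ := by
    have hs : {η : E2 | ¬ η ≠ ξ} = {ξ} := by ext y; simp
    rw [ae_iff, hs]
    exact measure_singleton ξ
  have hbound : ∀ᵐ η : E2,
      ‖f η • ((‖ξ-η‖^2)⁻¹ • (ξ-η) - (‖ξ‖^2)⁻¹ • ξ)‖ ≤ g1 η + g2 η + g3 η := by
    filter_upwards [hae] with η hη
    rw [norm_smul, Real.norm_eq_abs,
      K_sub_norm (ξ - η) ξ (sub_ne_zero.2 (Ne.symm hη)) hξne,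
      sub_sub_cancel_left, norm_neg]
    exact pointwise_bound C₀ hC₀ ξ η hξ hη (|f η|) (abs_nonneg _) (hdec' η)
  have hnorm : ‖∫ η : E2, f η • ((‖ξ-η‖^2)⁻¹ • (ξ-η) - (‖ξ‖^2)⁻¹ • ξ)‖ ≤
      ∫ η : E2, (g1 η + g2 η + g3 η) :=
    norm_integral_le_of_norm_le ((hg1int.add hg2int).add hg3int) hbound
  have hsplitint : (∫ η : E2, (g1 η + g2 η + g3 η)) =
      (∫ η : E2, g1 η) + (∫ η : E2, g2 η) + (∫ η : E2, g3 η) := by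
    have e1 : (∫ η : E2, (g1 η + g2 η + g3 η)) =
        (∫ η : E2, (g1 η + g2 η)) + ∫ η : E2, g3 η :=
      integral_add (hg1int.add hg2int) hg3int
    have e2 : (∫ η : E2, (g1 η + g2 η)) = (∫ η : E2, g1 η) + ∫ η : E2, g2 η :=
      integral_add hg1int hg2int
    rw [e1, e2]
  have hI1 : (∫ η : E2, g1 η) = (2/‖ξ‖^2) * M₁ := by
    rw [hg1, integral_const_mul, hM]
  have hI2 : (∫ η : E2, g2 η) ≤ (C₀/‖ξ‖) * (2 * V * (2/‖ξ‖)) := by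
    rw [hg2, integral_const_mul]
    refine mul_le_mul_of_nonneg_left ?_ (by positivity)
    refine (tail_bound (‖ξ‖/2) (by positivity)).trans ?_
    have hii : (1+‖ξ‖/2)⁻¹ ≤ 2/‖ξ‖ := by
      have ha1 : (0:ℝ) < ‖ξ‖/2 := by positivity
      have ha2 : ‖ξ‖/2 ≤ 1 + ‖ξ‖/2 := by linarith
      have hb := inv_anti₀ ha1 ha2
      rwa [inv_div] at hb
    rw [hV]
    gcongr
  have hI3 : (∫ η : E2, g3 η) = (8*C₀/‖ξ‖^2) * J := by
    rw [hg3, integral_const_mul, hball_int_eq]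
  have hfinal : ‖∫ η : E2, f η • ((‖ξ-η‖^2)⁻¹ • (ξ-η))‖ ≤
      (2*M₁ + 4*V*C₀ + 8*C₀*J) / ‖ξ‖^2 := by
    rw [← hsub]
    refine hnorm.trans ?_
    rw [hsplitint, hI1, hI3]
    have e2 : (C₀/‖ξ‖) * (2*V*(2/‖ξ‖)) = 4*V*C₀/‖ξ‖^2 := by
      field_simp; try ring
    have etot : (2/‖ξ‖^2)*M₁ + 4*V*C₀/‖ξ‖^2 + (8*C₀/‖ξ‖^2)*J
        = (2*M₁ + 4*V*C₀ + 8*C₀*J)/‖ξ‖^2 := by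
      field_simp; try ring
    rw [← etot]
    have := hI2
    rw [e2] at this
    linarith
  rw [norm_smul, Real.norm_eq_abs]
  have habs : |(-(2*Real.pi)⁻¹ : ℝ)| ≤ 1 := by
    rw [abs_neg, abs_of_nonneg (by positivity)]
    rw [inv_le_one_iff₀]
    right
    linarith [Real.pi_gt_three]
  have hr2 : ‖ξ‖ ^ (-(2:ℝ)) = (‖ξ‖^2)⁻¹ := by
    rw [← Real.rpow_natCast ‖ξ‖ 2, ← Real.rpow_neg (norm_nonneg ξ)]; norm_num
  rw [hr2]
  calc |(-(2*Real.pi)⁻¹ : ℝ)| * ‖∫ η : E2, f η • ((‖ξ-η‖^2)⁻¹ • (ξ-η))‖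
      ≤ 1 * ‖∫ η : E2, f η • ((‖ξ-η‖^2)⁻¹ • (ξ-η))‖ :=
        mul_le_mul_of_nonneg_right habs (norm_nonneg _)
    _ = ‖∫ η : E2, f η • ((‖ξ-η‖^2)⁻¹ • (ξ-η))‖ := one_mul _
    _ ≤ (2*M₁ + 4*V*C₀ + 8*C₀*J) / ‖ξ‖^2 := hfinal
    _ = (2*M₁ + 4*V*C₀ + 8*C₀*J) * (‖ξ‖^2)⁻¹ := div_eq_mul_inv _ _
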